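/- Let a, α ∈ ℕ and X_{a,α} = {0} ∪ { Σ_{i=1}^k 2^{-m_i} : 1 ≤ k ≤ a, α ≤ m_1 < ... < m_k }. If x_0 = Σ_{i=1}^k 2^{-m_i} with α ≤ m_1 < ... < m_k and 1 ≤ k ≤ a, then the intersection of X_{a,α} with the interval (x_0 - 2^{-m_k - a}, x_0] equals {x_0}. -/
import Mathlib

private lemma geom_bound' : ∀ (u : Finset ℕ) (d : ℕ), (∀ m ∈ u, d < m) →
    ∑ m ∈ u, (2:ℝ)^(-(m:ℤ)) ≤ (2:ℝ)^(-(d:ℤ)) - (2:ℝ)^(-(d:ℤ) - u.card) := by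
  intro u
  induction u using Finset.strongInduction with
  | _ u ih =>
    intro d h
    rcases u.eq_empty_or_nonempty with rfl | hu
    · simp
    · set m₀ := u.min' hu with hm₀def
      have hm₀ : m₀ ∈ u := u.min'_mem hu
      have h1 : d < m₀ := h _ hm₀
      have hsub : u.erase m₀ ⊂ u := Finset.erase_ssubset hm₀
      have hall : ∀ m ∈ u.erase m₀, m₀ < m := fun m hm =>
        lt_of_le_of_ne (u.min'_le m (Finset.mem_of_mem_erase hm))
          (Ne.symm (Finset.ne_of_mem_erase hm))
      have hrec := ih _ hsub m₀ hall
      have hsum : ∑ m ∈ u, (2:ℝ)^(-(m:ℤ)) =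
          (2:ℝ)^(-(m₀:ℤ)) + ∑ m ∈ u.erase m₀, (2:ℝ)^(-(m:ℤ)) :=
        (Finset.add_sum_erase _ _ hm₀).symm
      have hpos := Finset.card_pos.mpr hu
      have hcard : (u.card : ℤ) = (u.erase m₀).card + 1 := by
        rw [Finset.card_erase_of_mem hm₀]; omega
      have h2 : (2:ℝ)^(-(m₀:ℤ) + 1) ≤ (2:ℝ)^(-(d:ℤ)) :=
        zpow_le_zpow_right₀ one_le_two (by omega)
      have e1 : (2:ℝ)^(-(m₀:ℤ) + 1) = 2 * (2:ℝ)^(-(m₀:ℤ)) := by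
        rw [zpow_add₀ (by norm_num : (2:ℝ) ≠ 0)]; ring
      have e2 : (2:ℝ)^(-(m₀:ℤ) - (u.erase m₀).card)
          = (2:ℝ)^(-(m₀:ℤ) + 1) * (2:ℝ)^(-(u.card:ℤ)) := by
        rw [← zpow_add₀ (by norm_num : (2:ℝ) ≠ 0)]; congr 1; omega
      have e3 : (2:ℝ)^(-(d:ℤ) - u.card)
          = (2:ℝ)^(-(d:ℤ)) * (2:ℝ)^(-(u.card:ℤ)) := by
        rw [sub_eq_add_neg, zpow_add₀ (by norm_num : (2:ℝ) ≠ 0)]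
      have hc1 : (2:ℝ)^(-(u.card:ℤ)) ≤ 1 := by
        apply zpow_le_one_of_nonpos₀ one_le_two; omega
      have hc0 : (0:ℝ) < (2:ℝ)^(-(u.card:ℤ)) := by positivity
      nlinarith [mul_le_mul_of_nonneg_right h2 (by linarith : (0:ℝ) ≤ 1 - (2:ℝ)^(-(u.card:ℤ)))]

/-- The set `X_{a,α} = {0} ∪ { ∑_{i=1}^k 2^{-m_i} : 1 ≤ k ≤ a, α ≤ m_1 < ⋯ < m_k }`. -/
def dyadicSet (a α : ℕ) : Set ℝ :=
  {0} ∪ {x | ∃ s : Finset ℕ, s.Nonempty ∧ s.card ≤ a ∧ (∀ m ∈ s, α ≤ m) ∧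
    x = ∑ m ∈ s, (2 : ℝ) ^ (-(m : ℤ))}

/-- If `x₀ = ∑_{i=1}^k 2^{-m_i}` with `α ≤ m_1 < ⋯ < m_k`, `1 ≤ k ≤ a`, then
`X_{a,α} ∩ (x₀ - 2^{-m_k - a}, x₀] = {x₀}`. -/
theorem dyadicSet_inter_Ioc (a α : ℕ) (s : Finset ℕ) (hs : s.Nonempty)
    (hcard : s.card ≤ a) (hα : ∀ m ∈ s, α ≤ m) :
    dyadicSet a α ∩
      Set.Ioc ((∑ m ∈ s, (2 : ℝ) ^ (-(m : ℤ))) - 2 ^ (-((s.max' hs : ℤ) + a)))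
        (∑ m ∈ s, (2 : ℝ) ^ (-(m : ℤ))) = {∑ m ∈ s, (2 : ℝ) ^ (-(m : ℤ))} := by
  set M := s.max' hs with hM
  set x₀ := ∑ m ∈ s, (2 : ℝ) ^ (-(m : ℤ)) with hx₀
  have ha : 1 ≤ a := le_trans (Finset.card_pos.mpr hs) hcard
  have hMmem : M ∈ s := s.max'_mem hs
  have hx₀M : (2:ℝ)^(-(M:ℤ)) ≤ x₀ :=
    Finset.single_le_sum (f := fun m : ℕ => (2:ℝ)^(-(m:ℤ)))
      (fun m _ => by positivity) hMmem
  have hεM : (2:ℝ)^(-((M:ℤ)+a)) < (2:ℝ)^(-(M:ℤ)) :=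
    zpow_lt_zpow_right₀ one_lt_two (by omega)
  ext x
  simp only [Set.mem_inter_iff, Set.mem_singleton_iff, Set.mem_Ioc]
  constructor
  · rintro ⟨hmem, hlo, hhi⟩
    rcases hmem with h0 | ⟨u, hu, hucard, huα, rfl⟩
    · simp only [Set.mem_singleton_iff] at h0
      subst h0
      linarith
    · by_contra hne
      have hsu : s ≠ u := fun h =>
        hne (by rw [hx₀]; exact Finset.sum_congr h.symm fun _ _ => rfl)
      have hv : ((s \ u) ∪ (u \ s)).Nonempty := by
        rw [Finset.nonempty_iff_ne_empty]
        intro h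
        rw [Finset.union_eq_empty, Finset.sdiff_eq_empty_iff_subset,
          Finset.sdiff_eq_empty_iff_subset] at h
        exact hsu (Finset.Subset.antisymm h.1 h.2)
      set d := ((s \ u) ∪ (u \ s)).min' hv with hd
      have hdmem := ((s \ u) ∪ (u \ s)).min'_mem hv
      have hdle : ∀ m ∈ (s \ u) ∪ (u \ s), d ≤ m :=
        fun m hm => Finset.min'_le _ m hm
      -- sum decomposition
      have hdecomp : x₀ - ∑ m ∈ u, (2:ℝ)^(-(m:ℤ)) =
          (∑ m ∈ s \ u, (2:ℝ)^(-(m:ℤ))) - ∑ m ∈ u \ s, (2:ℝ)^(-(m:ℤ)) := by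
        have h1 : (∑ m ∈ s ∩ u, (2:ℝ)^(-(m:ℤ))) + ∑ m ∈ s \ u, (2:ℝ)^(-(m:ℤ)) = x₀ :=
          Finset.sum_inter_add_sum_sdiff s u _
        have h2 : (∑ m ∈ u ∩ s, (2:ℝ)^(-(m:ℤ))) + ∑ m ∈ u \ s, (2:ℝ)^(-(m:ℤ)) =
            ∑ m ∈ u, (2:ℝ)^(-(m:ℤ)) :=
          Finset.sum_inter_add_sum_sdiff u s _
        rw [Finset.inter_comm] at h2
        linarith
      rcases Finset.mem_union.mp hdmem with hds | hdu
      · -- d ∈ s \ u : gap at least 2^{-(d+a)} ≥ 2^{-(M+a)}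
        have hdins : d ∈ s := (Finset.mem_sdiff.mp hds).1
        have hdM : d ≤ M := s.le_max' d hdins
        have hlow : (2:ℝ)^(-(d:ℤ)) ≤ ∑ m ∈ s \ u, (2:ℝ)^(-(m:ℤ)) :=
          Finset.single_le_sum (f := fun m : ℕ => (2:ℝ)^(-(m:ℤ)))
            (fun m _ => by positivity) hds
        have hgt : ∀ m ∈ u \ s, d < m := by
          intro m hm
          rcases (hdle m (Finset.mem_union_right _ hm)).lt_or_eq with h | h
          · exact h
          · exfalso; rw [← h] at hm
            exact (Finset.mem_sdiff.mp hds).2 (Finset.mem_sdiff.mp hm).1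
        have hup := geom_bound' (u \ s) d hgt
        have hcard2 : (2:ℝ)^(-(d:ℤ) - a) ≤ (2:ℝ)^(-(d:ℤ) - (u \ s).card) := by
          apply zpow_le_zpow_right₀ one_le_two
          have : (u \ s).card ≤ a := le_trans (Finset.card_le_card (Finset.sdiff_subset)) hucard
          omega
        have hMa : (2:ℝ)^(-((M:ℤ)+a)) ≤ (2:ℝ)^(-(d:ℤ) - a) :=
          zpow_le_zpow_right₀ one_le_two (by omega)
        linarith
      · -- d ∈ u \ s : then x > x₀, contradiction
        have hdinu : d ∈ u := (Finset.mem_sdiff.mp hdu).1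
        have hlow : (2:ℝ)^(-(d:ℤ)) ≤ ∑ m ∈ u \ s, (2:ℝ)^(-(m:ℤ)) :=
          Finset.single_le_sum (f := fun m : ℕ => (2:ℝ)^(-(m:ℤ)))
            (fun m _ => by positivity) hdu
        have hgt : ∀ m ∈ s \ u, d < m := by
          intro m hm
          rcases (hdle m (Finset.mem_union_left _ hm)).lt_or_eq with h | h
          · exact h
          · exfalso; rw [← h] at hm
            exact (Finset.mem_sdiff.mp hdu).2 (Finset.mem_sdiff.mp hm).1
        have hup := geom_bound' (s \ u) d hgt
        have hps : (0:ℝ) < (2:ℝ)^(-(d:ℤ) - (s \ u).card) := by positivity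
        linarith
  · rintro rfl
    refine ⟨Or.inr ⟨s, hs, hcard, hα, rfl⟩, ?_, le_refl _⟩
    have : (0:ℝ) < 2 ^ (-((M:ℤ) + a)) := by positivity
    linarith
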